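/- For all real parameters η > 0, φ > 0 and every α with 0 < α < 1, the mean of the three-inflated PCD is ∑_{y=0}^∞ y·P(y) = 3α + (1−α)·(η+4φ)/(η(φ+η)). -/

import Mathlib

lemma choose_four_cast (y : ℕ) :
    (((y + 3).choose 4 : ℝ)) = (y : ℝ) * (y + 1) * (y + 2) * (y + 3) / 24 := by
  have h : (y + 3).choose 4 * 24 = y * (y + 1) * (y + 2) * (y + 3) := by
    have hd : (y + 3).descFactorial 4 = (y + 3) * (y + 2) * (y + 1) * y := by
      simp [Nat.descFactorial]
      ring
    have := Nat.descFactorial_eq_factorial_mul_choose (y + 3) 4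
    rw [hd] at this
    simp [Nat.factorial] at this
    nlinarith [this]
  have := congrArg (fun n : ℕ => (n : ℝ)) h
  push_cast at this
  linarith

/-- The mean of the three-inflated PCD. -/
theorem thipcd_mean (η φ α : ℝ) (hη : 0 < η) (hφ : 0 < φ) (hα0 : 0 < α) (hα1 : α < 1) :
    ∑' y : ℕ, (y : ℝ) *
        (if y = 3 then
          α + (1 - α) * ((η ^ 2 / ((φ + η) * (1 + η) ^ 7))
            * ((1 + η) ^ 3 + 20 * φ * η ^ 2))
        else
          (1 - α) * ((η ^ 2 / ((φ + η) * (1 + η) ^ (y + 4)))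
            * ((1 + η) ^ 3
              + (φ * η ^ 2 / 6) * ((y : ℝ) + 1) * ((y : ℝ) + 2) * ((y : ℝ) + 3))))
      = 3 * α + (1 - α) * ((η + 4 * φ) / (η * (φ + η))) := by
  set r : ℝ := (1 + η)⁻¹ with hr_def
  have h1η : (0:ℝ) < 1 + η := by linarith
  have h1η' : (1:ℝ) < 1 + η := by linarith
  have hr_pos : 0 < r := inv_pos.mpr h1η
  have hr_lt : r < 1 := by
    rw [hr_def, inv_lt_one_iff₀]; right; exact h1η'
  have hrnorm : ‖r‖ < 1 := by
    rw [Real.norm_eq_abs, abs_of_pos hr_pos]; exact hr_lt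
  have h1r : 1 - r = η / (1 + η) := by
    rw [hr_def]; field_simp; ring
  have hφη : φ + η ≠ 0 := by positivity
  set c1 : ℝ := (1 - α) * η ^ 2 / ((φ + η) * (1 + η)) with hc1
  set c2 : ℝ := 4 * (1 - α) * φ * η ^ 4 / ((φ + η) * (1 + η) ^ 4) with hc2
  -- building-block sums
  have H1 : HasSum (fun y : ℕ => c1 * ((y : ℝ) * r ^ y)) (c1 * (r / (1 - r) ^ 2)) :=
    (hasSum_coe_mul_geometric_of_norm_lt_one hrnorm).mul_left c1
  have H4' : HasSum (fun n : ℕ => (((n + 4).choose 4 : ℝ)) * r ^ n) (1 / (1 - r) ^ 5) :=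
    hasSum_choose_mul_geometric_of_norm_lt_one 4 hrnorm
  have H4'' : HasSum (fun n : ℕ => (((n + 1 + 3).choose 4 : ℝ)) * r ^ (n + 1))
      (r / (1 - r) ^ 5) := by
    have h := H4'.mul_left r
    have e1 : (fun n : ℕ => (((n + 1 + 3).choose 4 : ℝ)) * r ^ (n + 1))
        = fun n : ℕ => r * ((((n + 4).choose 4 : ℝ)) * r ^ n) := by
      funext n
      have : n + 1 + 3 = n + 4 := by omega
      rw [this, pow_succ]; ring
    have e2 : r / (1 - r) ^ 5 = r * (1 / (1 - r) ^ 5) := by ring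
    rw [e1, e2]; exact h
  have H4 : HasSum (fun y : ℕ => (((y + 3).choose 4 : ℝ)) * r ^ y) (r / (1 - r) ^ 5) := by
    rw [← hasSum_nat_add_iff' 1]
    simpa using H4''
  have H4c : HasSum (fun y : ℕ => c2 * ((((y + 3).choose 4 : ℝ)) * r ^ y))
      (c2 * (r / (1 - r) ^ 5)) := H4.mul_left c2
  have Hite : HasSum (fun y : ℕ => if y = 3 then 3 * α else 0) (3 * α) := by
    exact hasSum_ite_eq (3 : ℕ) (3 * α)
  have Htotal := (Hite.add H1).add H4c
  -- the summand equals the decomposition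
  have hfun : ∀ y : ℕ, (y : ℝ) *
        (if y = 3 then
          α + (1 - α) * ((η ^ 2 / ((φ + η) * (1 + η) ^ 7))
            * ((1 + η) ^ 3 + 20 * φ * η ^ 2))
        else
          (1 - α) * ((η ^ 2 / ((φ + η) * (1 + η) ^ (y + 4)))
            * ((1 + η) ^ 3
              + (φ * η ^ 2 / 6) * ((y : ℝ) + 1) * ((y : ℝ) + 2) * ((y : ℝ) + 3))))
      = ((if y = 3 then 3 * α else 0) + c1 * ((y : ℝ) * r ^ y))
        + c2 * ((((y + 3).choose 4 : ℝ)) * r ^ y) := by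
    intro y
    have hpow : ((1 + η) : ℝ) ^ (y + 4) = (1 + η) ^ y * (1 + η) ^ 4 := pow_add _ y 4
    have hpy : ((1 + η) : ℝ) ^ y ≠ 0 := pow_ne_zero _ (ne_of_gt h1η)
    have hry : r ^ y = ((1 + η) ^ y)⁻¹ := by rw [hr_def, inv_pow]
    rw [choose_four_cast]
    by_cases h3 : y = 3
    · subst h3
      rw [if_pos rfl, if_pos rfl]
      push_cast
      rw [hc1, hc2, hry]
      norm_num
      field_simp
      ring
    · rw [if_neg h3, if_neg h3]
      rw [hc1, hc2, hry, hpow]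
      field_simp
      ring
  rw [tsum_congr hfun, Htotal.tsum_eq, h1r]
  have hη1 : η / (1 + η) ≠ 0 := by positivity
  rw [hc1, hc2, hr_def]
  field_simp
  ring
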